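/- Let n and m be positive integers with m ≤ n, and let a_1 < a_2 < ... < a_m be distinct positive integers. Consider the power sum map φ : ℂ^n → ℂ^m whose j-th coordinate is φ_j(x) = x_1^{a_j} + x_2^{a_j} + ... + x_n^{a_j}. Then φ is dominant; that is, the image of φ is dense in ℂ^m (with respect to the standard Euclidean topology on ℂ^m). -/

import Mathlib

open MvPolynomial Finset

namespace PowerSumAux

variable {m n : ℕ}

lemma prod_monomial {ι : Type*} (s : Finset ι) (g : ι → (Fin n →₀ ℕ)) (c : ι → ℂ) :
    ∏ i ∈ s, (monomial (g i) (c i) : MvPolynomial (Fin n) ℂ)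
      = monomial (∑ i ∈ s, g i) (∏ i ∈ s, c i) := by
  classical
  induction s using Finset.induction_on with
  | empty => simp
  | insert _ _ h ih => rw [prod_insert h, prod_insert h, sum_insert h, ih, monomial_mul]

lemma pderiv_aeval (p : Fin m → MvPolynomial (Fin n) ℂ) (q : MvPolynomial (Fin m) ℂ)
    (i : Fin n) :
    pderiv i (aeval p q) = ∑ j, aeval p (pderiv j q) * pderiv i (p j) := by
  classical
  induction q using MvPolynomial.induction_on with
  | C c => simp [algebraMap_eq, pderiv_C]
  | add q r hq hr => simp only [map_add, hq, hr, add_mul, Finset.sum_add_distrib]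
  | mul_X q j₀ hq =>
    have h1 : ∀ j : Fin m, pderiv j (q * X j₀) = pderiv j q * X j₀ + q * pderiv j (X j₀) :=
      fun j => pderiv_mul
    simp only [map_mul, aeval_X, pderiv_mul, hq, h1, map_add, add_mul, Finset.sum_add_distrib]
    congr 1
    · rw [Finset.sum_mul]
      exact Finset.sum_congr rfl fun j _ => by ring
    · rw [Finset.sum_eq_single j₀]
      · simp
      · intro j _ hj
        rw [pderiv_X_of_ne (Ne.symm hj)]
        simp
      · intro h; exact absurd (Finset.mem_univ _) h

lemma eq_C_of_td_zero (q : MvPolynomial (Fin m) ℂ) (h : q.totalDegree = 0) :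
    q = C (coeff 0 q) := by
  ext d
  rcases eq_or_ne d 0 with rfl | hd
  · simp
  · rw [coeff_C, if_neg (Ne.symm hd)]
    apply coeff_eq_zero_of_totalDegree_lt
    rw [h]
    obtain ⟨j, hj⟩ : ∃ j, d j ≠ 0 := by
      by_contra hall; push_neg at hall; exact hd (Finsupp.ext fun j => hall j)
    apply Finset.sum_pos'
    · exact fun i _ => Nat.zero_le _
    · exact ⟨j, Finsupp.mem_support_iff.mpr hj, Nat.pos_of_ne_zero hj⟩

lemma eq_C_of_pderiv_eq_zero (q : MvPolynomial (Fin m) ℂ)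
    (h : ∀ j, pderiv j q = 0) : q = C (coeff 0 q) := by
  classical
  ext d
  rcases eq_or_ne d 0 with rfl | hd
  · simp
  · rw [coeff_C, if_neg (Ne.symm hd)]
    by_contra hc
    obtain ⟨j, hj⟩ : ∃ j, d j ≠ 0 := by
      by_contra hall; push_neg at hall; exact hd (Finsupp.ext fun j => hall j)
    have key : coeff (d - Finsupp.single j 1) (pderiv j q) = (d j : ℂ) * coeff d q := by
      conv_lhs => rw [← support_sum_monomial_coeff q]
      rw [map_sum, coeff_sum]
      rw [Finset.sum_eq_single d]
      · rw [pderiv_monomial, coeff_monomial, if_pos rfl]; ring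
      · intro v hv hvd
        rw [pderiv_monomial, coeff_monomial]
        by_cases hvj : v j = 0
        · simp [hvj]
        · have hsub : v - Finsupp.single j 1 = d - Finsupp.single j 1 → v = d := by
            intro heq
            ext k
            by_cases hk : k = j
            · subst hk
              have h1 : v k - 1 = d k - 1 := by
                have := congrArg (fun f => f k) heq
                simpa [Finsupp.tsub_apply, Finsupp.single_apply] using this
              omega
            · have := congrArg (fun f => f k) heq
              simpa [Finsupp.tsub_apply, Finsupp.single_apply, (Ne.symm hk : ¬ j = k)] using this
          rw [if_neg (fun heq => hvd (hsub heq))]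
      · intro hd'
        rw [notMem_support_iff.mp hd']
        simp
    rw [h j] at key
    simp only [coeff_zero] at key
    have : (d j : ℂ) ≠ 0 := Nat.cast_ne_zero.mpr hj
    exact hc ((mul_eq_zero.mp key.symm).resolve_left this)

lemma td_pderiv_lt (q : MvPolynomial (Fin m) ℂ) (j : Fin m) (h : pderiv j q ≠ 0) :
    (pderiv j q).totalDegree < q.totalDegree := by
  classical
  have htd : q.totalDegree ≠ 0 := by
    intro h0
    apply h
    rw [eq_C_of_td_zero q h0, pderiv_C]
  have hrep : pderiv j q
      = ∑ v ∈ q.support, monomial (v - Finsupp.single j 1) (coeff v q * v j) := by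
    conv_lhs => rw [← support_sum_monomial_coeff q]
    rw [map_sum]
    exact Finset.sum_congr rfl fun v _ => pderiv_monomial
  rw [hrep]
  have hb : ∀ v ∈ q.support,
      (monomial (v - Finsupp.single j 1) (coeff v q * v j)).totalDegree
        ≤ q.totalDegree - 1 := by
    intro v hv
    by_cases hc : coeff v q * (v j : ℂ) = 0
    · rw [show ((v j : ℂ)) = ((v j : ℕ) : ℂ) from rfl] at hc
      rw [show coeff v q * ((v j : ℕ) : ℂ) = coeff v q * v j from rfl] at hc
      rw [hc]
      simp
    · rw [totalDegree_monomial _ hc]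
      have hvj : v j ≠ 0 := by
        intro h0
        apply hc
        simp [h0]
      have hle : Finsupp.single j 1 ≤ v := by
        rw [Finsupp.single_le_iff]
        omega
      have hsum : (v - Finsupp.single j 1).sum (fun _ e => e) + 1 = v.sum (fun _ e => e) := by
        have := tsub_add_cancel_of_le hle
        calc (v - Finsupp.single j 1).sum (fun _ e => e) + 1
            = (v - Finsupp.single j 1).sum (fun _ e => e)
              + (Finsupp.single j 1).sum (fun _ e => e) := by
              rw [Finsupp.sum_single_index]; rfl
          _ = ((v - Finsupp.single j 1) + Finsupp.single j 1).sum (fun _ e => e) := by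
              rw [Finsupp.sum_add_index'] <;> simp
          _ = v.sum (fun _ e => e) := by rw [this]
      have hvle : v.sum (fun _ e => e) ≤ q.totalDegree := le_totalDegree hv
      omega
  calc (∑ v ∈ q.support, monomial (v - Finsupp.single j 1) (coeff v q * v j)).totalDegree
      ≤ q.support.sup (fun v => (monomial (v - Finsupp.single j 1) (coeff v q * v j)).totalDegree) :=
        totalDegree_finset_sum _ _
    _ ≤ q.totalDegree - 1 := Finset.sup_le hb
    _ < q.totalDegree := by omega

end PowerSumAux
open MvPolynomial Finset

namespace PowerSumAux

variable {m n : ℕ}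

lemma det_ne_zero (hmn : m ≤ n) (a : Fin m → ℕ) (ha : StrictMono a) (hapos : ∀ j, 0 < a j) :
    (Matrix.of fun i j : Fin m =>
        (C (a j : ℂ) * X (Fin.castLE hmn i) ^ (a j - 1) : MvPolynomial (Fin n) ℂ)).det ≠ 0 := by
  classical
  set e : Fin m → Fin n := Fin.castLE hmn with he'
  have he : Function.Injective e := Fin.castLE_injective hmn
  set w : Equiv.Perm (Fin m) → (Fin n →₀ ℕ) :=
    fun σ => ∑ i : Fin m, Finsupp.single (e (σ i)) (a i - 1) with hw
  have hwa : ∀ σ i₀, w σ (e (σ i₀)) = a i₀ - 1 := by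
    intro σ i₀
    rw [hw, Finsupp.finset_sum_apply, Finset.sum_eq_single i₀]
    · simp
    · intro i _ hi
      rw [Finsupp.single_apply, if_neg]
      exact fun hcontra => hi (σ.injective (he hcontra))
    · intro h; exact absurd (Finset.mem_univ _) h
  have hwinj : Function.Injective w := by
    intro σ τ hστ
    refine Equiv.ext fun i₀ => ?_
    have h1 : w σ (e (σ i₀)) = a i₀ - 1 := hwa σ i₀
    have h2 : w τ (e (σ i₀)) = a (τ.symm (σ i₀)) - 1 := by
      conv_lhs => rw [show σ i₀ = τ (τ.symm (σ i₀)) from (τ.apply_symm_apply _).symm]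
      exact hwa τ _
    rw [hστ, h2] at h1
    have ha1 : a (τ.symm (σ i₀)) = a i₀ := by
      have := hapos i₀; have := hapos (τ.symm (σ i₀)); omega
    have : τ.symm (σ i₀) = i₀ := ha.injective ha1
    conv_rhs => rw [← this]
    exact (τ.apply_symm_apply _).symm
  have hdet : (Matrix.of fun i j : Fin m =>
        (C (a j : ℂ) * X (e i) ^ (a j - 1) : MvPolynomial (Fin n) ℂ)).det
      = ∑ σ : Equiv.Perm (Fin m),
          monomial (w σ) ((((Equiv.Perm.sign σ : ℤ) : ℂ)) * ∏ i, (a i : ℂ)) := by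
    rw [Matrix.det_apply]
    refine Finset.sum_congr rfl fun σ _ => ?_
    have hprod : (∏ i, (Matrix.of fun i j : Fin m =>
          (C (a j : ℂ) * X (e i) ^ (a j - 1) : MvPolynomial (Fin n) ℂ)) (σ i) i)
        = monomial (w σ) (∏ i, (a i : ℂ)) := by
      rw [show (∏ i, (Matrix.of fun i j : Fin m =>
          (C (a j : ℂ) * X (e i) ^ (a j - 1) : MvPolynomial (Fin n) ℂ)) (σ i) i)
        = ∏ i, monomial (Finsupp.single (e (σ i)) (a i - 1)) ((a i : ℂ)) from
        Finset.prod_congr rfl fun i _ => by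
          rw [Matrix.of_apply, X_pow_eq_monomial, C_mul_monomial, mul_one]]
      rw [prod_monomial]
    rw [hprod, Units.smul_def, zsmul_eq_mul]
    rw [show (((Equiv.Perm.sign σ : ℤ) : MvPolynomial (Fin n) ℂ))
      = C (((Equiv.Perm.sign σ : ℤ) : ℂ)) from (map_intCast (C : ℂ →+* MvPolynomial (Fin n) ℂ) _).symm]
    rw [C_mul_monomial]
  intro h0
  have hcoeff : coeff (w 1) ((Matrix.of fun i j : Fin m =>
        (C (a j : ℂ) * X (e i) ^ (a j - 1) : MvPolynomial (Fin n) ℂ)).det)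
      = ∏ i, (a i : ℂ) := by
    rw [hdet, coeff_sum, Finset.sum_eq_single (1 : Equiv.Perm (Fin m))]
    · rw [coeff_monomial, if_pos rfl]
      simp
    · intro σ _ hσ
      rw [coeff_monomial, if_neg (fun heq => hσ (hwinj heq))]
    · intro h; exact absurd (Finset.mem_univ _) h
  rw [h0, coeff_zero] at hcoeff
  have : (∏ i, (a i : ℂ)) ≠ 0 :=
    Finset.prod_ne_zero_iff.mpr fun i _ => Nat.cast_ne_zero.mpr (hapos i).ne'
  exact this hcoeff.symm

lemma aeval_powerSum_injective (hmn : m ≤ n) (a : Fin m → ℕ) (ha : StrictMono a)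
    (hapos : ∀ j, 0 < a j) :
    Function.Injective
      (aeval (R := ℂ) (fun j : Fin m => ∑ i : Fin n, (X i : MvPolynomial (Fin n) ℂ) ^ a j)) := by
  classical
  set p : Fin m → MvPolynomial (Fin n) ℂ := fun j => ∑ i, X i ^ a j with hp
  rw [injective_iff_map_eq_zero]
  suffices H : ∀ (d : ℕ) (q : MvPolynomial (Fin m) ℂ), q.totalDegree ≤ d → aeval p q = 0 → q = 0 by
    intro q hq; exact H q.totalDegree q le_rfl hq
  intro d
  induction d using Nat.strong_induction_on with
  | _ d IH =>
  intro q hdeg hq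
  have hpd : ∀ (i : Fin m) (j : Fin m),
      pderiv (Fin.castLE hmn i) (p j) = C (a j : ℂ) * X (Fin.castLE hmn i) ^ (a j - 1) := by
    intro i j
    rw [hp]
    simp only [map_sum]
    rw [Finset.sum_eq_single (Fin.castLE hmn i)]
    · rw [pderiv_pow, pderiv_X_self, mul_one, ← C_eq_coe_nat]
    · intro k _ hk
      rw [pderiv_pow, pderiv_X_of_ne hk, mul_zero]
    · intro h; exact absurd (Finset.mem_univ _) h
  have hker : ∀ j, aeval p (pderiv j q) = 0 := by
    set M : Matrix (Fin m) (Fin m) (MvPolynomial (Fin n) ℂ) :=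
      Matrix.of (fun i j : Fin m =>
        (C (a j : ℂ) * X (Fin.castLE hmn i) ^ (a j - 1) : MvPolynomial (Fin n) ℂ)) with hM
    set v : Fin m → MvPolynomial (Fin n) ℂ := fun j => aeval p (pderiv j q) with hv
    have hMv : M.mulVec v = 0 := by
      funext i
      have hchain := pderiv_aeval p q (Fin.castLE hmn i)
      rw [hq, map_zero] at hchain
      have : M.mulVec v i = ∑ j, aeval p (pderiv j q) * pderiv (Fin.castLE hmn i) (p j) := by
        rw [Matrix.mulVec, dotProduct]
        exact Finset.sum_congr rfl fun j _ => by rw [hM, Matrix.of_apply, hpd i j, hv, mul_comm]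
      rw [Pi.zero_apply, this, ← hchain]
    have hdet := det_ne_zero hmn a ha hapos
    have hzero : M.det • v = 0 := by
      have h2 : M.adjugate.mulVec (M.mulVec v) = 0 := by rw [hMv, Matrix.mulVec_zero]
      rwa [Matrix.mulVec_mulVec, Matrix.adjugate_mul, Matrix.smul_mulVec,
        Matrix.one_mulVec] at h2
    intro j
    have hj := congrFun hzero j
    simp only [Pi.smul_apply, Pi.zero_apply, smul_eq_mul] at hj
    exact (mul_eq_zero.mp hj).resolve_left hdet
  have hCq : q = C (coeff 0 q) := by
    apply eq_C_of_pderiv_eq_zero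
    intro j
    by_cases h0 : pderiv j q = 0
    · exact h0
    · have hlt := td_pderiv_lt q j h0
      exact IH (pderiv j q).totalDegree (lt_of_lt_of_le hlt hdeg) _ le_rfl (hker j)
  rw [hCq] at hq ⊢
  rw [aeval_C] at hq
  have : coeff 0 q = 0 := by
    have h2 : C (coeff 0 q) = (0 : MvPolynomial (Fin n) ℂ) := hq
    rwa [C_eq_zero] at h2
  rw [this, map_zero]

end PowerSumAux
open MvPolynomial Finset

namespace PowerSumAux

variable {m n : ℕ}

set_option maxHeartbeats 2000000 in
set_option synthInstance.maxHeartbeats 1000000 in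
lemma exists_solution (hmn : m ≤ n) (a : Fin m → ℕ) (ha : StrictMono a) (hapos : ∀ j, 0 < a j) :
    ∃ D : MvPolynomial (Fin m) ℂ, D ≠ 0 ∧
      ∀ y : Fin m → ℂ, eval y D ≠ 0 → ∃ x : Fin n → ℂ, ∀ j, (∑ i, x i ^ a j) = y j := by
  classical
  set Rz := MvPolynomial (Fin m) ℂ with hRz
  let p : Fin m → MvPolynomial (Fin n) ℂ := fun j => ∑ i, X i ^ a j
  let F := FractionRing Rz
  let Fb := AlgebraicClosure F
  let zmap : Rz →+* Fb := algebraMap Rz Fb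
  have hzeq : zmap = (algebraMap F Fb).comp (algebraMap Rz F) :=
    IsScalarTower.algebraMap_eq Rz F Fb
  have hzinj : Function.Injective zmap := by
    rw [hzeq]
    exact (algebraMap F Fb).injective.comp (IsFractionRing.injective Rz F)
  -- build an embedding of Fb into an algebraically closed field containing MvPolynomial (Fin n) ℂ
  let Lx := FractionRing (MvPolynomial (Fin n) ℂ)
  let Ω := AlgebraicClosure Lx
  let xmap : MvPolynomial (Fin n) ℂ →+* Ω := algebraMap (MvPolynomial (Fin n) ℂ) Ω
  have hxinj : Function.Injective xmap := by
    rw [show xmap = (algebraMap Lx Ω).comp (algebraMap (MvPolynomial (Fin n) ℂ) Lx) from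
      IsScalarTower.algebraMap_eq _ Lx Ω]
    exact (algebraMap Lx Ω).injective.comp (IsFractionRing.injective _ Lx)
  let γ : Rz →+* Ω := xmap.comp (aeval (R := ℂ) p).toRingHom
  have hγinj : Function.Injective γ := by
    apply hxinj.comp
    exact aeval_powerSum_injective hmn a ha hapos
  have hγu : ∀ (s : nonZeroDivisors Rz), IsUnit (γ s) := by
    intro s
    have hs0 : (s : Rz) ≠ 0 := nonZeroDivisors.coe_ne_zero s
    have hne : γ s ≠ 0 := fun h => hs0 (hγinj (h.trans (map_zero γ).symm))
    exact isUnit_iff_ne_zero.mpr hne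
  let γF : F →+* Ω := IsLocalization.lift (M := nonZeroDivisors Rz) (S := F) hγu
  letI : Algebra F Ω := γF.toAlgebra
  haveI : Module.IsTorsionFree F Ω := Module.isTorsionFree_iff_algebraMap_injective.mpr γF.injective
  haveI : Module.IsTorsionFree F Fb :=
    Module.isTorsionFree_iff_algebraMap_injective.mpr (algebraMap F Fb).injective
  let θ : Fb →ₐ[F] Ω := IsAlgClosed.lift
  have hθz : ∀ r, θ (zmap r) = γ r := by
    intro r
    show θ (zmap r) = γ r
    rw [show zmap r = algebraMap F Fb (algebraMap Rz F r) from by rw [hzeq]; rfl,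
      AlgHom.commutes]
    exact IsLocalization.lift_eq hγu r
  -- the generic system has a solution ξ over Fb, by the Nullstellensatz
  let qgen : Fin m → MvPolynomial (Fin n) Fb :=
    fun j => (∑ i, X i ^ a j) - C (zmap (X j))
  let I : Ideal (MvPolynomial (Fin n) Fb) := Ideal.span (Set.range qgen)
  let Θ : MvPolynomial (Fin n) Fb →+* Ω := eval₂Hom (θ : Fb →+* Ω) (fun i => xmap (X i))
  have hΘq : ∀ j, Θ (qgen j) = 0 := by
    intro j
    have h1 : Θ (∑ i, X i ^ a j) = ∑ i : Fin n, (xmap (X i)) ^ a j := by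
      rw [map_sum]
      exact Finset.sum_congr rfl fun i _ => by rw [map_pow, eval₂Hom_X']
    have h2 : Θ (C (zmap (X j))) = γ (X j) := by
      rw [eval₂Hom_C]; exact hθz _
    have h3 : γ (X j) = xmap (p j) := by
      show xmap (aeval p (X j)) = xmap (p j)
      rw [aeval_X]
    have h4 : xmap (p j) = ∑ i : Fin n, (xmap (X i)) ^ a j := by
      show xmap (∑ i, X i ^ a j) = _
      rw [map_sum]
      exact Finset.sum_congr rfl fun i _ => map_pow _ _ _
    rw [map_sub, h1, h2, h3, h4, sub_self]
  have hItop : I ≠ ⊤ := by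
    intro htop
    have h1 : (1 : MvPolynomial (Fin n) Fb) ∈ I := htop ▸ Submodule.mem_top
    have hle : I ≤ RingHom.ker Θ := by
      rw [Ideal.span_le]
      rintro _ ⟨j, rfl⟩
      exact RingHom.mem_ker.mpr (hΘq j)
    have h2 := hle h1
    rw [RingHom.mem_ker, map_one] at h2
    exact one_ne_zero h2
  obtain ⟨Mx, hMxmax, hIM⟩ := Ideal.exists_le_maximal I hItop
  obtain ⟨ξ, hξ⟩ := (isMaximal_iff_eq_vanishingIdeal_singleton).mp hMxmax
  have hsol : ∀ j, (∑ i, ξ i ^ a j) = zmap (X j) := by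
    intro j
    have hmem : qgen j ∈ Mx := hIM (Ideal.subset_span ⟨j, rfl⟩)
    rw [hξ] at hmem
    have h0 : eval ξ (qgen j) = 0 := hmem ξ rfl
    have h1 : eval ξ (qgen j) = (∑ i, ξ i ^ a j) - zmap (X j) := by
      show eval ξ ((∑ i, X i ^ a j) - C (zmap (X j))) = _
      rw [map_sub, map_sum, eval_C]
      congr 1
      exact Finset.sum_congr rfl fun i _ => by rw [map_pow, eval_X]
    rw [h1, sub_eq_zero] at h0
    exact h0
  -- each ξ i is algebraic over Rz; get integral multiples
  have hξalg : ∀ i, IsAlgebraic Rz (ξ i) := by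
    intro i
    rw [IsFractionRing.isAlgebraic_iff Rz F Fb]
    exact Algebra.IsAlgebraic.isAlgebraic (ξ i)
  have hinj0 : ∀ x : Rz, algebraMap Rz Fb x = 0 → x = 0 := by
    intro x hx
    exact hzinj (by rw [show zmap x = algebraMap Rz Fb x from rfl, hx, map_zero])
  choose η dd hdd0 hη using fun i => (show ∃ (x : integralClosure Rz Fb) (y : Rz), y ≠ 0 ∧
    algebraMap Rz Fb y * ξ i = x from by
      obtain ⟨y, hy, hint⟩ := (hξalg i).exists_integral_multiple
      exact ⟨⟨y • ξ i, hint⟩, y, hy, (Algebra.smul_def y (ξ i)).symm⟩)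
  refine ⟨∏ i, dd i, Finset.prod_ne_zero_iff.mpr fun i _ => hdd0 i, ?_⟩
  intro y hy
  let φ : Rz →+* ℂ := (eval y : Rz →+* ℂ)
  -- the key equation, inside the integral closure O
  have hkeyO : ∀ j, ((algebraMap Rz (integralClosure Rz Fb) (∏ i, dd i)) ^ a j * algebraMap Rz (integralClosure Rz Fb) (X j) : integralClosure Rz Fb)
      = ∑ i : Fin n, (algebraMap Rz (integralClosure Rz Fb) (∏ k ∈ Finset.univ.erase i, dd k)) ^ a j * (η i) ^ a j := by
    intro j
    have hD : ∀ i : Fin n, zmap (∏ k, dd k)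
        = zmap (∏ k ∈ Finset.univ.erase i, dd k) * zmap (dd i) := by
      intro i
      rw [← map_mul]
      congr 1
      rw [mul_comm]
      exact (Finset.mul_prod_erase univ dd (mem_univ i)).symm
    have hFb : (zmap (∏ i, dd i)) ^ a j * zmap (X j)
        = ∑ i : Fin n, (zmap (∏ k ∈ Finset.univ.erase i, dd k)) ^ a j * ((η i : Fb)) ^ a j := by
      rw [← hsol j, Finset.mul_sum]
      refine Finset.sum_congr rfl fun i _ => ?_
      rw [hD i, mul_pow, mul_assoc, ← mul_pow (zmap (dd i)) (ξ i), hη i]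
    apply Subtype.coe_injective
    push_cast
    simp only [map_prod] at hFb
    exact hFb
  -- going up: a prime of O over ker φ
  haveI : (RingHom.ker φ).IsPrime := RingHom.ker_isPrime φ
  have hkerle : Ideal.comap (algebraMap Rz (integralClosure Rz Fb)) (⊥ : Ideal (integralClosure Rz Fb)) ≤ RingHom.ker φ := by
    intro r hr
    rw [Ideal.mem_comap, Ideal.mem_bot] at hr
    have h0 : algebraMap Rz Fb r = 0 := by
      have := congrArg (Subtype.val : integralClosure Rz Fb → Fb) hr
      simpa using this
    rw [RingHom.mem_ker, hinj0 r h0, map_zero]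
  obtain ⟨Q, -, hQprime, hQcomap⟩ :=
    Ideal.exists_ideal_over_prime_of_isIntegral (RingHom.ker φ) ⊥ hkerle
  haveI := hQprime
  -- quotient rings
  let Abar := Rz ⧸ Ideal.comap (algebraMap Rz (integralClosure Rz Fb)) Q
  let Bbar := integralClosure Rz Fb ⧸ Q
  haveI : (Ideal.comap (algebraMap Rz (integralClosure Rz Fb)) Q).IsPrime := by
    rw [hQcomap]; infer_instance
  let φbar : Abar →+* ℂ := Ideal.Quotient.lift _ φ (fun r hr => by
    rw [hQcomap, RingHom.mem_ker] at hr; exact hr)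
  have hφbarinj : Function.Injective φbar := by
    rw [injective_iff_map_eq_zero]
    intro x hx
    obtain ⟨r, rfl⟩ := Ideal.Quotient.mk_surjective x
    rw [Ideal.Quotient.lift_mk] at hx
    rw [Ideal.Quotient.eq_zero_iff_mem, hQcomap, RingHom.mem_ker]
    exact hx
  letI : Algebra Abar ℂ := φbar.toAlgebra
  haveI : Module.IsTorsionFree Abar ℂ := Module.isTorsionFree_iff_algebraMap_injective.mpr hφbarinj
  haveI := (Module.isTorsionFree_iff_algebraMap_injective
    (R := Abar) (A := Bbar)).mpr Ideal.algebraMap_quotient_injective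
  haveI : Algebra.IsAlgebraic Abar Bbar := Algebra.IsIntegral.isAlgebraic
  let ψA : Bbar →ₐ[Abar] ℂ := IsAlgClosed.lift
  let ψ : integralClosure Rz Fb →+* ℂ := (ψA : Bbar →+* ℂ).comp (Ideal.Quotient.mk Q)
  have hψ : ∀ r, ψ (algebraMap Rz (integralClosure Rz Fb) r) = φ r := by
    intro r
    show ψA (Ideal.Quotient.mk Q (algebraMap Rz (integralClosure Rz Fb) r)) = φ r
    have h1 : Ideal.Quotient.mk Q (algebraMap Rz (integralClosure Rz Fb) r)
        = algebraMap Abar Bbar (Ideal.Quotient.mk (Ideal.comap (algebraMap Rz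
            (integralClosure Rz Fb)) Q) r) :=
      (Ideal.quotientMap_mk (H := le_of_eq rfl) (x := r)).symm
    rw [h1, AlgHom.commutes]
    show φbar _ = φ r
    exact Ideal.Quotient.lift_mk _ _ _
  -- conclude
  have hfin : ∀ j, (eval y (∏ i, dd i)) ^ a j * y j
      = ∑ i : Fin n, ((eval y (∏ k ∈ Finset.univ.erase i, dd k)) * ψ (η i)) ^ a j := by
    intro j
    have h0 := congrArg ψ (hkeyO j)
    rw [map_mul, map_pow, map_sum, hψ, hψ, show φ (X j) = y j from eval_X _] at h0
    calc (eval y (∏ i : Fin n, dd i)) ^ a j * y j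
        = φ (∏ i : Fin n, dd i) ^ a j * y j := rfl
      _ = ∑ i : Fin n, ψ ((algebraMap Rz (integralClosure Rz Fb)
            (∏ k ∈ Finset.univ.erase i, dd k)) ^ a j * (η i) ^ a j) := h0
      _ = ∑ i : Fin n, ((eval y (∏ k ∈ Finset.univ.erase i, dd k)) * ψ (η i)) ^ a j := by
          refine Finset.sum_congr rfl fun i _ => ?_
          rw [map_mul, map_pow, map_pow, hψ, mul_pow]
  have hE : (eval y (∏ i, dd i) : ℂ) ≠ 0 := hy
  refine ⟨fun i => ((eval y (∏ k ∈ Finset.univ.erase i, dd k)) * ψ (η i))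
    / (eval y (∏ i, dd i)), fun j => ?_⟩
  have hcalc : ∑ i : Fin n, (((eval y (∏ k ∈ Finset.univ.erase i, dd k)) * ψ (η i))
      / (eval y (∏ i, dd i))) ^ a j
      = (∑ i : Fin n, ((eval y (∏ k ∈ Finset.univ.erase i, dd k)) * ψ (η i)) ^ a j)
        / (eval y (∏ i, dd i)) ^ a j := by
    rw [Finset.sum_div]
    exact Finset.sum_congr rfl fun i _ => div_pow _ _ _
  rw [hcalc, ← hfin j]
  rw [mul_comm]
  exact mul_div_cancel_right₀ _ (pow_ne_zero _ hE)

end PowerSumAux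
/-- The power sum map `φ : ℂ^n → ℂ^m`, with coordinates
`φ_j(x) = ∑_{i=1}^n x_i^{a_j}` for distinct positive exponents
`a_1 < … < a_m` and `m ≤ n`, is dominant: its image is dense in `ℂ^m`. -/
theorem powerSumMap_denseRange
    (n m : ℕ) (hn : 0 < n) (hm : 0 < m) (hmn : m ≤ n)
    (a : Fin m → ℕ) (ha : StrictMono a) (hapos : ∀ j, 0 < a j) :
    DenseRange (fun x : Fin n → ℂ => fun j : Fin m => ∑ i : Fin n, x i ^ a j) := by
  classical
  obtain ⟨D, hD, hsolve⟩ := PowerSumAux.exists_solution hmn a ha hapos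
  rw [DenseRange, Metric.dense_iff]
  intro y ε hε
  -- a point where D does not vanish
  obtain ⟨ys, hys⟩ : ∃ ys : Fin m → ℂ, MvPolynomial.eval ys D ≠ 0 := by
    by_contra h
    push_neg at h
    exact hD (MvPolynomial.funext fun x => by rw [h x, map_zero])
  set v : Fin m → ℂ := fun j => ys j - y j with hv
  -- one-variable slice polynomial
  set qv : Polynomial ℂ :=
    MvPolynomial.aeval (fun j => Polynomial.C (y j) + Polynomial.X * Polynomial.C (v j)) D with hqv
  have heval : ∀ s : ℂ, Polynomial.eval s qv = MvPolynomial.eval (fun j => y j + s * v j) D := by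
    intro s
    have hcomp : (Polynomial.aeval s).comp
          (MvPolynomial.aeval (R := ℂ)
            (fun j => Polynomial.C (y j) + Polynomial.X * Polynomial.C (v j)))
        = (MvPolynomial.aeval (fun j => y j + s * v j) :
            MvPolynomial (Fin m) ℂ →ₐ[ℂ] ℂ) := by
      apply MvPolynomial.algHom_ext
      intro j
      simp only [AlgHom.comp_apply, MvPolynomial.aeval_X, map_add, map_mul,
        Polynomial.aeval_C, Polynomial.aeval_X, Algebra.algebraMap_self, RingHom.id_apply]
    have h1 : Polynomial.eval s qv = (Polynomial.aeval s) qv := by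
      rw [Polynomial.coe_aeval_eq_eval]
    have h2 : (MvPolynomial.aeval (fun j => y j + s * v j)) D
        = MvPolynomial.eval (fun j => y j + s * v j) D := by
      rw [MvPolynomial.aeval_def, Algebra.algebraMap_self]
      rfl
    rw [h1, hqv, ← h2, ← AlgHom.comp_apply, hcomp]
  have hq1 : Polynomial.eval 1 qv = MvPolynomial.eval ys D := by
    rw [heval 1]
    have hfun : (fun j => y j + 1 * v j) = ys := by
      funext j
      rw [hv]
      ring
    rw [hfun]
  have hqv0 : qv ≠ 0 := by
    intro h0
    rw [h0, Polynomial.eval_zero] at hq1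
    exact hys hq1.symm
  -- choose a small real t with qv(t) ≠ 0
  have hroots : {t : ℝ | Polynomial.IsRoot qv (t : ℂ)}.Finite := by
    have : Set.InjOn (fun t : ℝ => (t : ℂ)) {t : ℝ | Polynomial.IsRoot qv (t : ℂ)} :=
      fun s _ t _ h => Complex.ofReal_injective h
    exact Set.Finite.of_finite_image
      (Set.Finite.subset (Polynomial.finite_setOf_isRoot hqv0) (by
        rintro _ ⟨t, ht, rfl⟩; exact ht)) this
  set δ : ℝ := ε / (‖v‖ + 1) with hδdef
  have hδ : 0 < δ := div_pos hε (by positivity)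
  obtain ⟨t, htIoo, htroot⟩ : ∃ t : ℝ, t ∈ Set.Ioo 0 δ ∧ ¬ Polynomial.IsRoot qv (t : ℂ) := by
    have hinf : (Set.Ioo (0:ℝ) δ).Infinite := Set.infinite_coe_iff.mp (Set.Ioo.infinite hδ)
    obtain ⟨t, ht⟩ := (hinf.diff hroots).nonempty
    exact ⟨t, ht.1, ht.2⟩
  set y' : Fin m → ℂ := fun j => y j + (t : ℂ) * v j with hy'
  have hy'D : MvPolynomial.eval y' D ≠ 0 := by
    rw [hy', ← heval]
    exact htroot
  obtain ⟨x, hx⟩ := hsolve y' hy'D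
  refine ⟨y', ?_, ⟨x, funext fun j => hx j⟩⟩
  rw [Metric.mem_ball, dist_pi_lt_iff hε]
  intro j
  rw [hy']
  show dist (y j + (t:ℂ) * v j) (y j) < ε
  have : dist (y j + (t:ℂ) * v j) (y j) = ‖(t:ℂ) * v j‖ := by
    rw [dist_eq_norm]
    congr 1
    ring
  rw [this, norm_mul, Complex.norm_real]
  have hvj : ‖v j‖ ≤ ‖v‖ := norm_le_pi_norm v j
  have ht0 : (0:ℝ) < t := htIoo.1
  have htδ : t < δ := htIoo.2
  calc ‖(t:ℝ)‖ * ‖v j‖ = t * ‖v j‖ := by rw [Real.norm_of_nonneg ht0.le]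
    _ ≤ t * ‖v‖ := by nlinarith [norm_nonneg (v j), norm_nonneg v]
    _ < δ * (‖v‖ + 1) := by nlinarith [norm_nonneg v]
    _ = ε := by
        rw [hδdef]
        field_simp
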